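/- Let d ≥ 1, let m_1, …, m_k be positive integers (not necessarily distinct) each coprime to d, let n be a positive integer not coprime to d, and set f = ∏_{i=1}^k Φ_{m_i}(t). Then the image of Φ_n(t) in the quotient ring ℤ[1/d][t]/(f) is a unit. -/

import Mathlib

open Polynomial

/-- Let `d ≥ 1`, let `m_1, …, m_k` be positive integers each coprime to `d`,
let `n` be a positive integer not coprime to `d`, and set `f = ∏ Φ_{m_i}(t)`. Then the image
of `Φ_n(t)` in `ℤ[1/d][t]/(f)` is a unit.  Here `ℤ[1/d]` is realized as `Localization.Away (d : ℤ)`. -/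
theorem cyclotomic_isUnit_in_quotient (d : ℕ) (hd : 1 ≤ d) (k : ℕ) (m : Fin k → ℕ)
    (hm : ∀ i, 1 ≤ m i) (hmc : ∀ i, Nat.Coprime (m i) d) (n : ℕ) (hn : 1 ≤ n)
    (hnc : ¬ Nat.Coprime n d) :
    IsUnit (Ideal.Quotient.mk
      (@Ideal.span _ CommRing.toRing.toSemiring {Polynomial.map (algebraMap ℤ (Localization.Away (d : ℤ)))
        (∏ i, cyclotomic (m i) ℤ)})
      (Polynomial.map (algebraMap ℤ (Localization.Away (d : ℤ))) (cyclotomic n ℤ))) := by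
  set f : (Localization.Away (d : ℤ))[X] := Polynomial.map (algebraMap ℤ (Localization.Away (d : ℤ))) (∏ i, cyclotomic (m i) ℤ) with hf
  set g : (Localization.Away (d : ℤ))[X] := Polynomial.map (algebraMap ℤ (Localization.Away (d : ℤ))) (cyclotomic n ℤ) with hg
  suffices htop : Ideal.span {f} ⊔ Ideal.span {g} = ⊤ by
    have h1 : (1 : (Localization.Away (d : ℤ))[X]) ∈ Ideal.span {f} ⊔ Ideal.span {g} := htop ▸ Submodule.mem_top
    obtain ⟨a, ha, b, hb, hab⟩ := Submodule.mem_sup.mp h1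
    obtain ⟨c, hc⟩ := Ideal.mem_span_singleton'.mp hb
    refine IsUnit.of_mul_eq_one (Ideal.Quotient.mk _ c) ?_
    have hfa : Ideal.Quotient.mk (@Ideal.span _ CommRing.toRing.toSemiring {f}) a = 0 :=
      Ideal.Quotient.eq_zero_iff_mem.mpr (Ideal.span_mono (by simp) ha)
    have hone : Ideal.Quotient.mk (@Ideal.span _ CommRing.toRing.toSemiring {f}) (a + c * g) = 1 := by
      rw [hc, hab, map_one]
    rw [RingHom.map_add, hfa, zero_add, RingHom.map_mul, mul_comm] at hone
    exact hone
  by_contra hne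
  obtain ⟨M, hMmax, hMle⟩ := Ideal.exists_le_maximal (@id (@Ideal _ CommRing.toRing.toSemiring) (Ideal.span {f} ⊔ Ideal.span {g})) hne
  haveI := hMmax
  letI hQ : HasQuotient ((Localization.Away (d : ℤ))[X])
      (@Ideal ((Localization.Away (d : ℤ))[X]) CommRing.toRing.toSemiring) := Ideal.instHasQuotient
  letI instF := @Ideal.Quotient.field ((Localization.Away (d : ℤ))[X]) _ M hMmax
  set ψ := Ideal.Quotient.mk (R := (Localization.Away (d : ℤ))[X]) M with hψ
  set x := ψ X with hx
  have key : ∀ s : ℕ, ψ (cyclotomic s (Localization.Away (d : ℤ))) = (cyclotomic s ((Localization.Away (d : ℤ))[X] ⧸ M)).eval x := by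
    intro s
    conv_lhs => rw [← eval₂_C_X (p := cyclotomic s (Localization.Away (d : ℤ)))]
    rw [hom_eval₂, eval₂_eq_eval_map, map_cyclotomic]
  -- Φ_n has root x
  have hgroot : (cyclotomic n ((Localization.Away (d : ℤ))[X] ⧸ M)).eval x = 0 := by
    rw [← key]
    have hgM : g ∈ M := hMle (le_sup_right (a := Ideal.span {f}) (Ideal.mem_span_singleton_self g))
    have : ψ g = 0 := Ideal.Quotient.eq_zero_iff_mem.mpr hgM
    rwa [hg, map_cyclotomic] at this
  -- some Φ_{m i} has root x
  have hfzero : ψ f = 0 := Ideal.Quotient.eq_zero_iff_mem.mpr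
      (hMle (le_sup_left (a := Ideal.span {f}) (Ideal.mem_span_singleton_self f)))
  have hfprod : ∏ i, (cyclotomic (m i) ((Localization.Away (d : ℤ))[X] ⧸ M)).eval x = 0 := by
    rw [← hfzero, hf, Polynomial.map_prod, map_prod]
    exact Finset.prod_congr rfl fun i _ => by rw [map_cyclotomic, key]
  obtain ⟨i, _, hiroot⟩ := Finset.prod_eq_zero_iff.mp hfprod
  -- d is a unit in ((Localization.Away (d : ℤ))[X] ⧸ M)
  have hdu : IsUnit ((d : ℤ) : ((Localization.Away (d : ℤ))[X] ⧸ M)) := by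
    have h1 : IsUnit (algebraMap ℤ (Localization.Away (d : ℤ)) (d : ℤ)) :=
      IsLocalization.map_units (Localization.Away (d : ℤ)) ⟨(d : ℤ), Submonoid.mem_powers _⟩
    have := (h1.map (C : (Localization.Away (d : ℤ)) →+* (Localization.Away (d : ℤ))[X])).map ψ
    rwa [show ψ (C (algebraMap ℤ (Localization.Away (d : ℤ)) (d : ℤ))) = (((d : ℤ) : ((Localization.Away (d : ℤ))[X] ⧸ M))) from
      (eq_intCast ((ψ.comp (C : (Localization.Away (d : ℤ)) →+* (Localization.Away (d : ℤ))[X])).comp (algebraMap ℤ (Localization.Away (d : ℤ)))) (d : ℤ))] at this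
  have hn0 : n ≠ 0 := by omega
  have hm0 : m i ≠ 0 := Nat.one_le_iff_ne_zero.mp (hm i)
  set q := ringChar ((Localization.Away (d : ℤ))[X] ⧸ M) with hqdef
  haveI : CharP ((Localization.Away (d : ℤ))[X] ⧸ M) q := ringChar.charP ((Localization.Away (d : ℤ))[X] ⧸ M)
  rcases CharP.char_is_prime_or_zero ((Localization.Away (d : ℤ))[X] ⧸ M) q with hq | hq
  · -- prime characteristic q, q ∤ d
    haveI : Fact q.Prime := ⟨hq⟩
    have hqd : ¬ (q ∣ d) := by
      intro hqd
      have : ((d : ℤ) : ((Localization.Away (d : ℤ))[X] ⧸ M)) = 0 := by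
        rw [CharP.intCast_eq_zero_iff ((Localization.Away (d : ℤ))[X] ⧸ M) q]
        exact_mod_cast Int.natCast_dvd_natCast.mpr hqd
      rw [this] at hdu
      exact not_isUnit_zero hdu
    -- set up q-free parts
    have hna : n = q ^ (n.factorization q) * (n / q ^ (n.factorization q)) :=
      (Nat.ordProj_mul_ordCompl_eq_self n q).symm
    have hma : m i = q ^ ((m i).factorization q) * (m i / q ^ ((m i).factorization q)) :=
      (Nat.ordProj_mul_ordCompl_eq_self (m i) q).symm
    have hqa : ¬ q ∣ (n / q ^ (n.factorization q)) := Nat.not_dvd_ordCompl hq hn0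
    have hqb : ¬ q ∣ (m i / q ^ ((m i).factorization q)) := Nat.not_dvd_ordCompl hq hm0
    haveI : NeZero ((n / q ^ (n.factorization q) : ℕ) : ((Localization.Away (d : ℤ))[X] ⧸ M)) :=
      ⟨fun h => hqa ((CharP.cast_eq_zero_iff ((Localization.Away (d : ℤ))[X] ⧸ M) q _).mp h)⟩
    haveI : NeZero ((m i / q ^ ((m i).factorization q) : ℕ) : ((Localization.Away (d : ℤ))[X] ⧸ M)) :=
      ⟨fun h => hqb ((CharP.cast_eq_zero_iff ((Localization.Away (d : ℤ))[X] ⧸ M) q _).mp h)⟩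
    have hprn : IsPrimitiveRoot x (n / q ^ (n.factorization q)) := by
      rw [← isRoot_cyclotomic_prime_pow_mul_iff_of_charP (p := q) (k := n.factorization q)]
      rw [IsRoot.def, ← hna]
      exact hgroot
    have hprm : IsPrimitiveRoot x (m i / q ^ ((m i).factorization q)) := by
      rw [← isRoot_cyclotomic_prime_pow_mul_iff_of_charP (p := q) (k := (m i).factorization q)]
      rw [IsRoot.def, ← hma]
      exact hiroot
    have heq := hprn.unique hprm
    -- produce prime p | n, p | d
    obtain ⟨p, hp, hpg⟩ := Nat.exists_prime_and_dvd (n := Nat.gcd n d) (fun h1 => hnc h1)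
    have hpn : p ∣ n := hpg.trans (Nat.gcd_dvd_left n d)
    have hpd : p ∣ d := hpg.trans (Nat.gcd_dvd_right n d)
    have hpq : p ≠ q := fun h => hqd (h ▸ hpd)
    have hpa : p ∣ n / q ^ (n.factorization q) := by
      have : p ∣ q ^ (n.factorization q) * (n / q ^ (n.factorization q)) := hna ▸ hpn
      exact (Nat.Coprime.dvd_of_dvd_mul_left
        (Nat.Coprime.pow_right _ ((Nat.coprime_primes hp hq).mpr hpq)) this)
    have hpm : p ∣ m i := heq ▸ hpa |>.trans (Nat.div_dvd_of_dvd (Nat.ordProj_dvd _ _))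
    exact hp.one_lt.ne' (Nat.eq_one_of_dvd_coprimes (hmc i) hpm hpd)
  · -- characteristic zero
    haveI : CharP ((Localization.Away (d : ℤ))[X] ⧸ M) 0 := hq ▸ (ringChar.charP ((Localization.Away (d : ℤ))[X] ⧸ M))
    haveI : CharZero ((Localization.Away (d : ℤ))[X] ⧸ M) := CharP.charP_to_charZero ((Localization.Away (d : ℤ))[X] ⧸ M)
    haveI : NeZero ((n : ℕ) : ((Localization.Away (d : ℤ))[X] ⧸ M)) := ⟨fun h => hn0 (Nat.cast_injective (h.trans Nat.cast_zero.symm))⟩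
    haveI : NeZero ((m i : ℕ) : ((Localization.Away (d : ℤ))[X] ⧸ M)) := ⟨fun h => hm0 (Nat.cast_injective (h.trans Nat.cast_zero.symm))⟩
    have hprn : IsPrimitiveRoot x n := isRoot_cyclotomic_iff.mp hgroot
    have hprm : IsPrimitiveRoot x (m i) := isRoot_cyclotomic_iff.mp hiroot
    exact hnc (hprn.unique hprm ▸ hmc i)
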